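/- Let a < b, s ∈ [a,b], ρ ≥ 0, α > 0, and let f : [a,b] → ℝ be continuous with |f(t) − c_a| ≤ ρ(t−a)^α for t ∈ [a,s] and |f(t) − c_b| ≤ ρ(b−t)^α for t ∈ [s,b], for constants c_a, c_b. Then |∫_a^b f(t)dt − c_a(s−a) − c_b(b−s)| ≤ (ρ/(α+1))[(s−a)^{α+1} + (b−s)^{α+1}]. -/

import Mathlib

/-- Core integration step of Theorem 3.1 in the case n = 1, ψ = id. -/
theorem iyengar_core_step (a b s ρ α ca cb : ℝ) (f : ℝ → ℝ) (hab : a < b)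
    (hs : s ∈ Set.Icc a b) (hρ : 0 ≤ ρ) (hα : 0 < α)
    (hf : ContinuousOn f (Set.Icc a b))
    (hba : ∀ t ∈ Set.Icc a s, |f t - ca| ≤ ρ * (t - a) ^ α)
    (hbb : ∀ t ∈ Set.Icc s b, |f t - cb| ≤ ρ * (b - t) ^ α) :
    |(∫ t in a..b, f t) - ca * (s - a) - cb * (b - s)| ≤
      ρ / (α + 1) * ((s - a) ^ (α + 1) + (b - s) ^ (α + 1)) := by
  obtain ⟨has, hsb⟩ := hs
  have hα1 : (0:ℝ) < α + 1 := by linarith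
  have hf1 : IntervalIntegrable f MeasureTheory.volume a s := by
    apply ContinuousOn.intervalIntegrable
    apply hf.mono
    rw [Set.uIcc_of_le has]
    exact Set.Icc_subset_Icc le_rfl hsb
  have hf2 : IntervalIntegrable f MeasureTheory.volume s b := by
    apply ContinuousOn.intervalIntegrable
    apply hf.mono
    rw [Set.uIcc_of_le hsb]
    exact Set.Icc_subset_Icc has le_rfl
  have hrint : IntervalIntegrable (fun x : ℝ => x ^ α) MeasureTheory.volume 0 (s - a) :=
    intervalIntegral.intervalIntegrable_rpow' (by linarith)
  have hg1 : IntervalIntegrable (fun t => ρ * (t - a) ^ α) MeasureTheory.volume a s := by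
    have := (hrint.comp_sub_right a).const_mul ρ
    simpa using this
  have hrint2 : IntervalIntegrable (fun x : ℝ => x ^ α) MeasureTheory.volume 0 (b - s) :=
    intervalIntegral.intervalIntegrable_rpow' (by linarith)
  have hg2 : IntervalIntegrable (fun t => ρ * (b - t) ^ α) MeasureTheory.volume s b := by
    have := ((hrint2.comp_sub_left b).const_mul ρ).symm
    simpa using this
  have hval1 : (∫ t in a..s, ρ * (t - a) ^ α) = ρ / (α + 1) * (s - a) ^ (α + 1) := by
    rw [intervalIntegral.integral_const_mul, intervalIntegral.integral_comp_sub_right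
      (fun x => x ^ α) a]
    rw [sub_self, integral_rpow (Or.inl (by linarith : (-1:ℝ) < α))]
    rw [Real.zero_rpow (by positivity)]
    ring
  have hval2 : (∫ t in s..b, ρ * (b - t) ^ α) = ρ / (α + 1) * (b - s) ^ (α + 1) := by
    rw [intervalIntegral.integral_const_mul, intervalIntegral.integral_comp_sub_left
      (fun x => x ^ α) b]
    rw [sub_self, integral_rpow (Or.inl (by linarith : (-1:ℝ) < α))]
    rw [Real.zero_rpow (by positivity)]
    ring
  have key1 : |∫ t in a..s, (f t - ca)| ≤ ρ / (α + 1) * (s - a) ^ (α + 1) := by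
    rw [← Real.norm_eq_abs]
    calc ‖∫ t in a..s, (f t - ca)‖ ≤ |∫ t in a..s, ρ * (t - a) ^ α| := by
          apply intervalIntegral.norm_integral_le_abs_of_norm_le _ hg1
          filter_upwards [MeasureTheory.ae_restrict_mem measurableSet_uIoc] with t ht
          have : t ∈ Set.Icc a s := by
            rw [Set.uIoc_of_le has] at ht
            exact ⟨le_of_lt ht.1, ht.2⟩
          simpa using hba t this
      _ = ρ / (α + 1) * (s - a) ^ (α + 1) := by
          rw [hval1, abs_of_nonneg (mul_nonneg (div_nonneg hρ hα1.le)
            (Real.rpow_nonneg (by linarith) _))]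
  have key2 : |∫ t in s..b, (f t - cb)| ≤ ρ / (α + 1) * (b - s) ^ (α + 1) := by
    rw [← Real.norm_eq_abs]
    calc ‖∫ t in s..b, (f t - cb)‖ ≤ |∫ t in s..b, ρ * (b - t) ^ α| := by
          apply intervalIntegral.norm_integral_le_abs_of_norm_le _ hg2
          filter_upwards [MeasureTheory.ae_restrict_mem measurableSet_uIoc] with t ht
          have : t ∈ Set.Icc s b := by
            rw [Set.uIoc_of_le hsb] at ht
            exact ⟨le_of_lt ht.1, ht.2⟩
          simpa using hbb t this
      _ = ρ / (α + 1) * (b - s) ^ (α + 1) := by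
          rw [hval2, abs_of_nonneg (mul_nonneg (div_nonneg hρ hα1.le)
            (Real.rpow_nonneg (by linarith) _))]
  have hsplit : (∫ t in a..b, f t) = (∫ t in a..s, f t) + (∫ t in s..b, f t) :=
    (intervalIntegral.integral_add_adjacent_intervals hf1 hf2).symm
  have e1 : (∫ t in a..s, (f t - ca)) = (∫ t in a..s, f t) - ca * (s - a) := by
    rw [intervalIntegral.integral_sub hf1 intervalIntegrable_const,
      intervalIntegral.integral_const, smul_eq_mul]
    ring
  have e2 : (∫ t in s..b, (f t - cb)) = (∫ t in s..b, f t) - cb * (b - s) := by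
    rw [intervalIntegral.integral_sub hf2 intervalIntegrable_const,
      intervalIntegral.integral_const, smul_eq_mul]
    ring
  have : (∫ t in a..b, f t) - ca * (s - a) - cb * (b - s) =
      (∫ t in a..s, (f t - ca)) + (∫ t in s..b, (f t - cb)) := by
    rw [e1, e2, hsplit]; ring
  rw [this, mul_add]
  exact (abs_add_le _ _).trans (add_le_add key1 key2)
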